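/- Representer theorem for two-layer regularized least-squares regression (Corollary 3.4): Let H(Φ,ℝ) be a reproducing kernel Hilbert space of continuous real-valued functions on Φ ⊆ ℝ^D with kernel K : Φ × Φ → ℝ, and let H(Ω,Φ) be a vector-valued reproducing kernel Hilbert space of continuous functions from Ω ⊆ ℝ^d to Φ with matrix-valued kernel 𝐊 : Ω × Ω → ℝ^{D×D}. Given pairwise distinct points x_1, …, x_N ∈ Ω, values y_1, …, y_N ∈ ℝ, and λ, μ > 0, consider minimizing J_{λ,μ}(f, g) = Σ_{j=1}^N |f(g(x_j)) − y_j|² + λ‖f‖²_{H(Φ,ℝ)} + μ‖g‖²_{H(Ω,Φ)} over (f, g) ∈ H(Φ,ℝ) × H(Ω,Φ). Then any minimizer (f^{λ}, g^{λ,μ}) satisfies g^{λ,μ} ∈ V_X := span{ 𝐊(x_i, ·) e_j : i = 1, …, N, j = 1, …, D }, where e_j ∈ ℝ^D is the j-th unit vector. -/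

import Mathlib

open scoped RealInnerProductSpace

noncomputable section

/-- `ℝ^n` with the Euclidean (ℓ²) structure. -/
abbrev Euc (n : ℕ) : Type := EuclideanSpace ℝ (Fin n)

/-- A scalar-valued reproducing kernel Hilbert space of functions from `D` to `ℝ`. -/
structure RKHS' (D : Type*) (H : Type*)
    [NormedAddCommGroup H] [InnerProductSpace ℝ H] where
  eval : H →ₗ[ℝ] D → ℝ
  eval_injective : Function.Injective eval
  K : D → D → ℝ
  kfun : D → H
  eval_kfun : ∀ x z, eval (kfun x) z = K x z
  repro : ∀ (f : H) (x : D), eval f x = ⟪f, kfun x⟫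

/-- A (vector-valued) reproducing kernel Hilbert space of functions from `D` to `ℝ^n`. -/
structure VRKHS (D : Type*) (n : ℕ) (H : Type*)
    [NormedAddCommGroup H] [InnerProductSpace ℝ H] where
  eval : H →ₗ[ℝ] D → Euc n
  eval_injective : Function.Injective eval
  K : D → D → Euc n →L[ℝ] Euc n
  kfun : D → Euc n → H
  eval_kfun : ∀ (x : D) (c : Euc n) (z : D), eval (kfun x c) z = K x z c
  repro : ∀ (g : H) (x : D) (c : Euc n), ⟪g, kfun x c⟫ = ⟪c, eval g x⟫

/-- **Representer theorem for two-layer regularized least-squares regression**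
(Corollary 3.4).  `Hout` is an RKHS of continuous real-valued functions on `Φ ⊆ ℝ^D`,
`Hin` a vector-valued RKHS of continuous functions from `Ω ⊆ ℝ^d` with values in `Φ`.
If the pair `(f, g)` minimizes
`J_{λ,μ}(f,g) = Σ_j |f(g(x_j)) − y_j|² + λ‖f‖² + μ‖g‖²` over all pairs, then
`g ∈ V_X = span{𝐊(x_i,·) e_j : i = 1,…,N, j = 1,…,D}`. -/
theorem two_layer_least_squares_representer
    (D d N : ℕ)
    (Φ : Set (Euc D)) (Ω : Set (Euc d))
    (Hout : Type*) [NormedAddCommGroup Hout] [InnerProductSpace ℝ Hout] [CompleteSpace Hout]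
    (Hin : Type*) [NormedAddCommGroup Hin] [InnerProductSpace ℝ Hin] [CompleteSpace Hin]
    (Vout : RKHS' (↥Φ) Hout)
    (houtCont : ∀ f : Hout, Continuous (Vout.eval f))
    (Vin : VRKHS (↥Ω) D Hin)
    (hinCont : ∀ g : Hin, Continuous (Vin.eval g))
    (hrange : ∀ (g : Hin) (x : Ω), Vin.eval g x ∈ Φ)
    (x : Fin N → ↥Ω) (hx : Function.Injective x) (y : Fin N → ℝ)
    (lam mu : ℝ) (hlam : 0 < lam) (hmu : 0 < mu)
    (f : Hout) (g : Hin)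
    (hmin : ∀ (f' : Hout) (g' : Hin),
        (∑ j, |Vout.eval f ⟨Vin.eval g (x j), hrange g (x j)⟩ - y j| ^ 2)
            + lam * ‖f‖ ^ 2 + mu * ‖g‖ ^ 2 ≤
          (∑ j, |Vout.eval f' ⟨Vin.eval g' (x j), hrange g' (x j)⟩ - y j| ^ 2)
            + lam * ‖f'‖ ^ 2 + mu * ‖g'‖ ^ 2) :
    g ∈ Submodule.span ℝ (Set.range fun p : Fin N × Fin D =>
      Vin.kfun (x p.1) (EuclideanSpace.single p.2 1)) := by

  set V : Submodule ℝ Hin := Submodule.span ℝ (Set.range fun p : Fin N × Fin D =>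
      Vin.kfun (x p.1) (EuclideanSpace.single p.2 1)) with hV
  haveI : FiniteDimensional ℝ V := FiniteDimensional.span_of_finite ℝ (Set.finite_range _)
  set g₀ : Hin := (Submodule.orthogonalProjectionOnto V g : Hin) with hg0
  have hperp : g - g₀ ∈ Vᗮ := V.sub_starProjection_mem_orthogonal g
  have hzero : ∀ j, Vin.eval (g - g₀) (x j) = 0 := by
    intro j
    ext i
    have h1 : Vin.kfun (x j) (EuclideanSpace.single i 1) ∈ V :=
      Submodule.subset_span ⟨(j, i), rfl⟩
    have h2 : ⟪g - g₀, Vin.kfun (x j) (EuclideanSpace.single i 1)⟫ = 0 :=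
      (Submodule.mem_orthogonal' V _).mp hperp _ h1
    have h3 := Vin.repro (g - g₀) (x j) (EuclideanSpace.single i 1)
    rw [h2] at h3
    have h4 : ⟪(EuclideanSpace.single i 1 : Euc D), Vin.eval (g - g₀) (x j)⟫
        = Vin.eval (g - g₀) (x j) i := by
      simp [EuclideanSpace.inner_single_left]
    rw [h4] at h3
    simpa using h3.symm
  have heval : ∀ j, Vin.eval g (x j) = Vin.eval g₀ (x j) := by
    intro j
    have := hzero j
    rw [map_sub] at this
    have : Vin.eval g (x j) - Vin.eval g₀ (x j) = 0 := this
    linear_combination (norm := module) this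
  have hle := hmin f g₀
  have hsum : (∑ j, |Vout.eval f ⟨Vin.eval g (x j), hrange g (x j)⟩ - y j| ^ 2)
      = (∑ j, |Vout.eval f ⟨Vin.eval g₀ (x j), hrange g₀ (x j)⟩ - y j| ^ 2) := by
    apply Finset.sum_congr rfl
    intro j _
    have : (⟨Vin.eval g (x j), hrange g (x j)⟩ : Φ) = ⟨Vin.eval g₀ (x j), hrange g₀ (x j)⟩ :=
      Subtype.ext (heval j)
    rw [this]
  rw [hsum] at hle
  have hnorm : ‖g‖ ^ 2 ≤ ‖g₀‖ ^ 2 := by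
    have := hle
    nlinarith
  have hinner : ⟪g₀, g - g₀⟫ = 0 := by
    have := hperp
    rw [Submodule.mem_orthogonal] at this
    exact (this g₀ (Submodule.orthogonalProjectionOnto V g).2).symm ▸ (this g₀ (Submodule.orthogonalProjectionOnto V g).2)
  have hpyth : ‖g‖ ^ 2 = ‖g₀‖ ^ 2 + ‖g - g₀‖ ^ 2 := by
    have h : g = g₀ + (g - g₀) := by abel
    calc ‖g‖ ^ 2 = ‖g₀ + (g - g₀)‖ ^ 2 := by rw [← h]
    _ = ‖g₀‖ ^ 2 + 2 * ⟪g₀, g - g₀⟫ + ‖g - g₀‖ ^ 2 := norm_add_sq_real _ _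
    _ = ‖g₀‖ ^ 2 + ‖g - g₀‖ ^ 2 := by rw [hinner]; ring
  have : ‖g - g₀‖ ^ 2 ≤ 0 := by linarith
  have hgg : g - g₀ = 0 := by
    have := sq_nonneg ‖g - g₀‖
    have : ‖g - g₀‖ = 0 := by nlinarith
    exact norm_eq_zero.mp this
  have : g = g₀ := by linear_combination (norm := module) hgg
  rw [this]
  exact (Submodule.orthogonalProjectionOnto V g).2
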